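/- In any contract network with fully substitutable choice functions satisfying IRC, every fully trail-stable outcome is trail-stable. -/

import Mathlib

variable {F X : Type*} [DecidableEq X] [DecidableEq F]

/-- Contracts in `Y` involving agent `f` (as buyer or seller). -/
def Xf (b s : X → F) (f : F) (Y : Finset X) : Finset X :=
  Y.filter (fun x => b x = f ∨ s x = f)

/-- Upstream contracts of `f` in `Y`. -/
def Yb (b : X → F) (f : F) (Y : Finset X) : Finset X := Y.filter (fun x => b x = f)

/-- Downstream contracts of `f` in `Z`. -/
def Zs (s : X → F) (f : F) (Z : Finset X) : Finset X := Z.filter (fun x => s x = f)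

/-- Chosen upstream contracts of `f` from upstream offers `Y` and downstream offers `Z`. -/
def CB (b s : X → F) (C : F → Finset X → Finset X) (f : F) (Y Z : Finset X) : Finset X :=
  (C f (Yb b f Y ∪ Zs s f Z)).filter (fun x => b x = f)

/-- Chosen downstream contracts of `f` from downstream offers `Z` and upstream offers `Y`. -/
def CS (b s : X → F) (C : F → Finset X → Finset X) (f : F) (Z Y : Finset X) : Finset X :=
  (C f (Zs s f Z ∪ Yb b f Y)).filter (fun x => s x = f)

/-- Rejected upstream contracts. -/
def RB (b s : X → F) (C : F → Finset X → Finset X) (f : F) (Y Z : Finset X) : Finset X :=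
  Yb b f Y \ CB b s C f Y Z

/-- Rejected downstream contracts. -/
def RS (b s : X → F) (C : F → Finset X → Finset X) (f : F) (Z Y : Finset X) : Finset X :=
  Zs s f Z \ CS b s C f Z Y

/-- Full substitutability: same-side substitutability and cross-side complementarity. -/
def FullySubstitutable (b s : X → F) (C : F → Finset X → Finset X) : Prop :=
  (∀ (f : F) (Y' Y Z : Finset X), Y' ⊆ Y → RB b s C f Y' Z ⊆ RB b s C f Y Z) ∧
  (∀ (f : F) (Z' Z Y : Finset X), Z' ⊆ Z → RS b s C f Z' Y ⊆ RS b s C f Z Y) ∧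
  (∀ (f : F) (Y Z' Z : Finset X), Z' ⊆ Z → RB b s C f Y Z ⊆ RB b s C f Y Z') ∧
  (∀ (f : F) (Z Y' Y : Finset X), Y' ⊆ Y → RS b s C f Z Y ⊆ RS b s C f Z Y')

/-- Irrelevance of rejected contracts. -/
def IRC (C : F → Finset X → Finset X) : Prop :=
  ∀ (f : F) (Y Z : Finset X), C f Y ⊆ Z → Z ⊆ Y → C f Z = C f Y

/-- `A` is `(W,f)`-rational: `A_f ⊆ C^f(W_f ∪ A_f)`. -/
def Rational (b s : X → F) (C : F → Finset X → Finset X) (W A : Finset X) (f : F) : Prop :=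
  Xf b s f A ⊆ C f (Xf b s f W ∪ Xf b s f A)

/-- `A` is acceptable (individually rational for all agents). -/
def Acceptable (b s : X → F) (C : F → Finset X → Finset X) (A : Finset X) : Prop :=
  ∀ f : F, C f (Xf b s f A) = Xf b s f A

/-- `{y,z}` is a `(W,f)`-rational pair: jointly but not individually `(W,f)`-rational. -/
def RationalPair (b s : X → F) (C : F → Finset X → Finset X) (W : Finset X) (f : F)
    (y z : X) : Prop :=
  ¬ Rational b s C W {y} f ∧ ¬ Rational b s C W {z} f ∧ Rational b s C W {y, z} f

/-- A locally blocking trail to outcome `A`. -/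
def LocallyBlockingTrail (b s : X → F) (C : F → Finset X → Finset X) (A : Finset X) : Prop :=
  ∃ (M : ℕ) (x : ℕ → X), 0 < M ∧
    (∀ i j, i < M → j < M → x i = x j → i = j) ∧
    (∀ i, i + 1 < M → b (x i) = s (x (i + 1))) ∧
    (∀ i, i < M → x i ∉ A) ∧
    Rational b s C A {x 0} (s (x 0)) ∧
    (∀ i, 0 < i → i < M → Rational b s C A {x (i - 1), x i} (b (x (i - 1)))) ∧
    Rational b s C A {x (M - 1)} (b (x (M - 1)))

/-- A blocking trail to outcome `A` (with initial- or final-segment rationality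
at intermediate agents). -/
def BlockingTrail (b s : X → F) (C : F → Finset X → Finset X) (A : Finset X) : Prop :=
  ∃ (M : ℕ) (x : ℕ → X), 0 < M ∧
    (∀ i j, i < M → j < M → x i = x j → i = j) ∧
    (∀ i, i + 1 < M → b (x i) = s (x (i + 1))) ∧
    (∀ i, i < M → x i ∉ A) ∧
    Rational b s C A {x 0} (s (x 0)) ∧
    ((∀ i, 0 < i → i < M →
        Rational b s C A ((Finset.range (i + 1)).image x) (b (x (i - 1)))) ∨
     (∀ i, 0 < i → i < M →
        Rational b s C A ((Finset.Ico (i - 1) M).image x) (b (x (i - 1))))) ∧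
    Rational b s C A {x (M - 1)} (b (x (M - 1)))

/-- Fully trail-stable outcome. -/
def FullyTrailStable (b s : X → F) (C : F → Finset X → Finset X) (A : Finset X) : Prop :=
  Acceptable b s C A ∧ ¬ LocallyBlockingTrail b s C A

/-- Trail-stable outcome. -/
def TrailStable (b s : X → F) (C : F → Finset X → Finset X) (A : Finset X) : Prop :=
  Acceptable b s C A ∧ ¬ BlockingTrail b s C A

/-- Set-stable outcome. -/
def SetStable (b s : X → F) (C : F → Finset X → Finset X) (A : Finset X) : Prop :=
  Acceptable b s C A ∧
  ¬ ∃ Z : Finset X, Z.Nonempty ∧ Disjoint Z A ∧ ∀ f : F, Rational b s C A Z f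

/-- Separable choice functions. -/
def Separable (b s : X → F) (C : F → Finset X → Finset X) : Prop :=
  ∀ (f : F) (A W : Finset X) (y z : X), b y = f → s z = f → y ∉ A → z ∉ A →
    Rational b s C W A f → RationalPair b s C W f y z →
    Rational b s C W (A ∪ {y, z}) f

/-- Simple choice functions (with an intensity map). -/
def Simple (b s : X → F) (C : F → Finset X → Finset X) : Prop :=
  ∀ f : F, ∃ w : X → ℝ, ∀ (W A : Finset X), Acceptable b s C A →
    Rational b s C W A f →
    ∀ y ∈ A, b y = f → ∃ z ∈ A, s z = f ∧ w y > w z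

/-- Aggregate upstream rejection function. -/
def RBagg [Fintype F] (b s : X → F) (C : F → Finset X → Finset X) (Y Z : Finset X) : Finset X :=
  (Finset.univ : Finset F).biUnion (fun f => RB b s C f Y Z)

/-- Aggregate downstream rejection function. -/
def RSagg [Fintype F] (b s : X → F) (C : F → Finset X → Finset X) (Z Y : Finset X) : Finset X :=
  (Finset.univ : Finset F).biUnion (fun f => RS b s C f Z Y)

section Aux

variable {b s : X → F} {C : F → Finset X → Finset X}

lemma lemB (hC : ∀ (f : F) (A : Finset X), C f A ⊆ A)
    (hfs : FullySubstitutable b s C) (hirc : IRC C)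
    (A S : Finset X) (hdisj : ∀ u ∈ S, u ∉ A) (f : F) (y : X)
    (hy : y ∈ S) (hby : b y = f) (hS : Rational b s C A S f) :
    Rational b s C A {y} f ∨
      ∃ z' ∈ S, z' ≠ y ∧ s z' = f ∧
        (Rational b s C A {y, z'} f ∨ Rational b s C A {z'} f) := by
  classical
  have hyS : y ∈ Xf b s f S := by simp [Xf, hy, hby]
  have hy0 : y ∈ C f (Xf b s f A ∪ Xf b s f S) := hS hyS
  set W1 : Finset X := Xf b s f A ∪ {y} ∪ Zs s f S with hW1def
  have harg1 : Yb b f (A ∪ {y}) ∪ Zs s f (A ∪ S) = W1 := by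
    ext u
    simp only [hW1def, Yb, Zs, Xf, Finset.mem_union, Finset.mem_filter,
      Finset.mem_singleton]
    by_cases h1 : u = y
    · subst h1; simp [hby]
    · have hdA := hdisj u
      tauto
  have harg0 : Yb b f (A ∪ S) ∪ Zs s f (A ∪ S) = Xf b s f A ∪ Xf b s f S := by
    ext u
    simp only [Yb, Zs, Xf, Finset.mem_union, Finset.mem_filter]
    tauto
  have hyW1 : y ∈ C f W1 := by
    have hsub : A ∪ {y} ⊆ A ∪ S := by
      intro u hu; simp only [Finset.mem_union, Finset.mem_singleton] at hu ⊢
      rcases hu with h | h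
      · exact Or.inl h
      · exact Or.inr (h ▸ hy)
    have hmono := hfs.1 f (A ∪ {y}) (A ∪ S) (A ∪ S) hsub
    have hynotR : y ∉ RB b s C f (A ∪ S) (A ∪ S) := by
      simp only [RB, Finset.mem_sdiff, not_and, not_not, CB, harg0]
      intro _
      simp [Finset.mem_filter, hy0, hby]
    have hynotR1 : y ∉ RB b s C f (A ∪ {y}) (A ∪ S) := fun h => hynotR (hmono h)
    have hymem : y ∈ Yb b f (A ∪ {y}) := by simp [Yb, hby]
    have hcb : y ∈ CB b s C f (A ∪ {y}) (A ∪ S) := by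
      by_contra hcon
      exact hynotR1 (Finset.mem_sdiff.2 ⟨hymem, hcon⟩)
    simp only [CB, harg1, Finset.mem_filter] at hcb
    exact hcb.1
  set C1 : Finset X := C f W1 with hC1def
  set D : Finset X := (Zs s f S) ∩ C1 with hDdef
  have hirc1 : C f (W1 \ (Zs s f S \ C1)) = C1 := by
    apply hirc f W1
    · intro u hu
      refine Finset.mem_sdiff.2 ⟨hC f W1 hu, ?_⟩
      simp only [Finset.mem_sdiff, not_and, not_not]
      intro _; exact hu
    · exact Finset.sdiff_subset
  by_cases hD : D ⊆ {y}
  · left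
    have hW2 : W1 \ (Zs s f S \ C1) = Xf b s f A ∪ {y} := by
      ext u
      constructor
      · intro hu
        obtain ⟨hu1, hu2⟩ := Finset.mem_sdiff.1 hu
        simp only [hW1def, Finset.mem_union] at hu1
        rcases hu1 with (h | h) | h
        · exact Finset.mem_union_left _ h
        · exact Finset.mem_union_right _ h
        · have huC1 : u ∈ C1 := by
            by_contra hcon; exact hu2 (Finset.mem_sdiff.2 ⟨h, hcon⟩)
          have : u ∈ D := Finset.mem_inter.2 ⟨h, huC1⟩
          exact Finset.mem_union_right _ (hD this)
      · intro hu
        refine Finset.mem_sdiff.2 ⟨?_, ?_⟩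
        · simp only [hW1def, Finset.mem_union]
          rcases Finset.mem_union.1 hu with h | h
          · exact Or.inl (Or.inl h)
          · exact Or.inl (Or.inr h)
        · simp only [Finset.mem_sdiff, not_and, not_not]
          intro huZ
          have huS : u ∈ S := (Finset.mem_filter.1 huZ).1
          rcases Finset.mem_union.1 hu with h | h
          · exact absurd ((Finset.mem_filter.1 h).1) (fun hA => hdisj u huS hA)
          · rw [Finset.mem_singleton.1 h]; exact hyW1
    have hyfin : y ∈ C f (Xf b s f A ∪ {y}) := by
      rw [← hW2, hirc1]; exact hyW1
    intro u hu
    have huy : u = y := by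
      simpa [Xf] using (Finset.mem_filter.1 hu).1
    subst huy
    have hrw : Xf b s f A ∪ Xf b s f {u} = Xf b s f A ∪ {u} := by
      ext v
      simp only [Xf, Finset.mem_union, Finset.mem_filter, Finset.mem_singleton]
      constructor
      · tauto
      · rintro (h | h)
        · exact Or.inl h
        · subst h; exact Or.inr ⟨rfl, Or.inl hby⟩
    rw [hrw]; exact hyfin
  · right
    obtain ⟨z', hz'D, hz'ne⟩ := Finset.not_subset.1 hD
    rw [Finset.mem_singleton] at hz'ne
    obtain ⟨hz'Zs, hz'C1⟩ := Finset.mem_inter.1 hz'D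
    have hz'S : z' ∈ S := (Finset.mem_filter.1 hz'Zs).1
    have hsz' : s z' = f := (Finset.mem_filter.1 hz'Zs).2
    refine ⟨z', hz'S, hz'ne, hsz', ?_⟩
    set W3 : Finset X := Xf b s f A ∪ {y, z'} with hW3def
    have harg3 : Zs s f (A ∪ {y, z'}) ∪ Yb b f (A ∪ {y}) = W3 := by
      ext u
      simp only [hW3def, Yb, Zs, Xf, Finset.mem_union, Finset.mem_filter,
        Finset.mem_insert, Finset.mem_singleton]
      by_cases h1 : u = y
      · subst h1; simp [hby]
      · by_cases h2 : u = z'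
        · subst h2; simp [hsz', h1]
        · have hdA := hdisj u
          tauto
    have harg1' : Zs s f (A ∪ S) ∪ Yb b f (A ∪ {y}) = W1 := by
      rw [← harg1]; exact Finset.union_comm _ _
    have hz'W3 : z' ∈ C f W3 := by
      have hsub : A ∪ {y, z'} ⊆ A ∪ S := by
        intro u hu
        simp only [Finset.mem_union, Finset.mem_insert, Finset.mem_singleton] at hu ⊢
        rcases hu with h | h | h
        · exact Or.inl h
        · exact Or.inr (h ▸ hy)
        · exact Or.inr (h ▸ hz'S)
      have hmono := hfs.2.1 f (A ∪ {y, z'}) (A ∪ S) (A ∪ {y}) hsub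
      have hz'notR : z' ∉ RS b s C f (A ∪ S) (A ∪ {y}) := by
        simp only [RS, Finset.mem_sdiff, not_and, not_not, CS, harg1']
        intro _
        simp [Finset.mem_filter, hz'C1, hsz']
        exact hz'C1
      have hz'notR3 : z' ∉ RS b s C f (A ∪ {y, z'}) (A ∪ {y}) := fun h => hz'notR (hmono h)
      have hz'mem : z' ∈ Zs s f (A ∪ {y, z'}) := by simp [Zs, hsz']
      have hcs : z' ∈ CS b s C f (A ∪ {y, z'}) (A ∪ {y}) := by
        by_contra hcon
        exact hz'notR3 (Finset.mem_sdiff.2 ⟨hz'mem, hcon⟩)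
      simp only [CS, harg3, Finset.mem_filter] at hcs
      exact hcs.1
    have hXfpair : Xf b s f {y, z'} = ({y, z'} : Finset X) := by
      ext u
      simp only [Xf, Finset.mem_filter, Finset.mem_insert, Finset.mem_singleton]
      constructor
      · tauto
      · rintro (h | h)
        · subst h; exact ⟨Or.inl rfl, Or.inl hby⟩
        · subst h; exact ⟨Or.inr rfl, Or.inr hsz'⟩
    have hWpair : Xf b s f A ∪ Xf b s f {y, z'} = W3 := by rw [hXfpair]
    by_cases hy3 : y ∈ C f W3
    · left
      intro u hu
      rw [hXfpair] at hu
      rw [hWpair]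
      rcases Finset.mem_insert.1 hu with h | h
      · exact h ▸ hy3
      · exact (Finset.mem_singleton.1 h) ▸ hz'W3
    · right
      have hirc3 : C f (W3 \ {y}) = C f W3 := by
        apply hirc f W3
        · intro u hu
          refine Finset.mem_sdiff.2 ⟨hC f W3 hu, ?_⟩
          simp only [Finset.mem_singleton]
          rintro rfl; exact hy3 hu
        · exact Finset.sdiff_subset
      have hW3y : W3 \ {y} = Xf b s f A ∪ {z'} := by
        ext u
        simp only [hW3def, Finset.mem_sdiff, Finset.mem_union, Finset.mem_insert,
          Finset.mem_singleton, Xf, Finset.mem_filter]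
        constructor
        · rintro ⟨h1 | h1 | h1, h2⟩
          · exact Or.inl h1
          · exact absurd h1 h2
          · exact Or.inr h1
        · rintro (h | h)
          · exact ⟨Or.inl h, fun hc => hdisj u (hc ▸ hy) h.1⟩
          · exact ⟨Or.inr (Or.inr h), fun hc => hz'ne (h ▸ hc ▸ rfl)⟩
      have hz'fin : z' ∈ C f (Xf b s f A ∪ {z'}) := by
        rw [← hW3y, hirc3]; exact hz'W3
      intro u hu
      have huz : u = z' := by
        simpa [Xf] using (Finset.mem_filter.1 hu).1
      subst huz
      have hrw : Xf b s f A ∪ Xf b s f {u} = Xf b s f A ∪ {u} := by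
        ext v
        simp only [Xf, Finset.mem_union, Finset.mem_filter, Finset.mem_singleton]
        constructor
        · tauto
        · rintro (h | h)
          · exact Or.inl h
          · subst h; exact Or.inr ⟨rfl, Or.inr hsz'⟩
      rw [hrw]; exact hz'fin

lemma lemB' (hC : ∀ (f : F) (A : Finset X), C f A ⊆ A)
    (hfs : FullySubstitutable b s C) (hirc : IRC C)
    (A S : Finset X) (hdisj : ∀ u ∈ S, u ∉ A) (f : F) (z : X)
    (hz : z ∈ S) (hsz : s z = f) (hS : Rational b s C A S f) :
    Rational b s C A {z} f ∨
      ∃ y' ∈ S, y' ≠ z ∧ b y' = f ∧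
        (Rational b s C A {y', z} f ∨ Rational b s C A {y'} f) := by
  classical
  have hzS : z ∈ Xf b s f S := by simp [Xf, hz, hsz]
  have hz0 : z ∈ C f (Xf b s f A ∪ Xf b s f S) := hS hzS
  set W1 : Finset X := Xf b s f A ∪ {z} ∪ Yb b f S with hW1def
  have harg1 : Zs s f (A ∪ {z}) ∪ Yb b f (A ∪ S) = W1 := by
    ext u
    simp only [hW1def, Yb, Zs, Xf, Finset.mem_union, Finset.mem_filter,
      Finset.mem_singleton]
    by_cases h1 : u = z
    · subst h1; simp [hsz]
    · have hdA := hdisj u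
      tauto
  have harg0 : Zs s f (A ∪ S) ∪ Yb b f (A ∪ S) = Xf b s f A ∪ Xf b s f S := by
    ext u
    simp only [Yb, Zs, Xf, Finset.mem_union, Finset.mem_filter]
    tauto
  have hzW1 : z ∈ C f W1 := by
    have hsub : A ∪ {z} ⊆ A ∪ S := by
      intro u hu; simp only [Finset.mem_union, Finset.mem_singleton] at hu ⊢
      rcases hu with h | h
      · exact Or.inl h
      · exact Or.inr (h ▸ hz)
    have hmono := hfs.2.1 f (A ∪ {z}) (A ∪ S) (A ∪ S) hsub
    have hznotR : z ∉ RS b s C f (A ∪ S) (A ∪ S) := by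
      simp only [RS, Finset.mem_sdiff, not_and, not_not, CS, harg0]
      intro _
      simp [Finset.mem_filter, hz0, hsz]
    have hznotR1 : z ∉ RS b s C f (A ∪ {z}) (A ∪ S) := fun h => hznotR (hmono h)
    have hzmem : z ∈ Zs s f (A ∪ {z}) := by simp [Zs, hsz]
    have hcs : z ∈ CS b s C f (A ∪ {z}) (A ∪ S) := by
      by_contra hcon
      exact hznotR1 (Finset.mem_sdiff.2 ⟨hzmem, hcon⟩)
    simp only [CS, harg1, Finset.mem_filter] at hcs
    exact hcs.1
  set C1 : Finset X := C f W1 with hC1def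
  set D : Finset X := (Yb b f S) ∩ C1 with hDdef
  have hirc1 : C f (W1 \ (Yb b f S \ C1)) = C1 := by
    apply hirc f W1
    · intro u hu
      refine Finset.mem_sdiff.2 ⟨hC f W1 hu, ?_⟩
      simp only [Finset.mem_sdiff, not_and, not_not]
      intro _; exact hu
    · exact Finset.sdiff_subset
  by_cases hD : D ⊆ {z}
  · left
    have hW2 : W1 \ (Yb b f S \ C1) = Xf b s f A ∪ {z} := by
      ext u
      constructor
      · intro hu
        obtain ⟨hu1, hu2⟩ := Finset.mem_sdiff.1 hu
        simp only [hW1def, Finset.mem_union] at hu1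
        rcases hu1 with (h | h) | h
        · exact Finset.mem_union_left _ h
        · exact Finset.mem_union_right _ h
        · have huC1 : u ∈ C1 := by
            by_contra hcon; exact hu2 (Finset.mem_sdiff.2 ⟨h, hcon⟩)
          have : u ∈ D := Finset.mem_inter.2 ⟨h, huC1⟩
          exact Finset.mem_union_right _ (hD this)
      · intro hu
        refine Finset.mem_sdiff.2 ⟨?_, ?_⟩
        · simp only [hW1def, Finset.mem_union]
          rcases Finset.mem_union.1 hu with h | h
          · exact Or.inl (Or.inl h)
          · exact Or.inl (Or.inr h)
        · simp only [Finset.mem_sdiff, not_and, not_not]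
          intro huY
          have huS : u ∈ S := (Finset.mem_filter.1 huY).1
          rcases Finset.mem_union.1 hu with h | h
          · exact absurd ((Finset.mem_filter.1 h).1) (fun hA => hdisj u huS hA)
          · rw [Finset.mem_singleton.1 h]; exact hzW1
    have hzfin : z ∈ C f (Xf b s f A ∪ {z}) := by
      rw [← hW2, hirc1]; exact hzW1
    intro u hu
    have huz : u = z := by
      simpa [Xf] using (Finset.mem_filter.1 hu).1
    subst huz
    have hrw : Xf b s f A ∪ Xf b s f {u} = Xf b s f A ∪ {u} := by
      ext v
      simp only [Xf, Finset.mem_union, Finset.mem_filter, Finset.mem_singleton]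
      constructor
      · tauto
      · rintro (h | h)
        · exact Or.inl h
        · subst h; exact Or.inr ⟨rfl, Or.inr hsz⟩
    rw [hrw]; exact hzfin
  · right
    obtain ⟨y', hy'D, hy'ne⟩ := Finset.not_subset.1 hD
    rw [Finset.mem_singleton] at hy'ne
    obtain ⟨hy'Yb, hy'C1⟩ := Finset.mem_inter.1 hy'D
    have hy'S : y' ∈ S := (Finset.mem_filter.1 hy'Yb).1
    have hby' : b y' = f := (Finset.mem_filter.1 hy'Yb).2
    refine ⟨y', hy'S, hy'ne, hby', ?_⟩
    set W3 : Finset X := Xf b s f A ∪ {y', z} with hW3def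
    have harg3 : Yb b f (A ∪ {y', z}) ∪ Zs s f (A ∪ {z}) = W3 := by
      ext u
      simp only [hW3def, Yb, Zs, Xf, Finset.mem_union, Finset.mem_filter,
        Finset.mem_insert, Finset.mem_singleton]
      by_cases h1 : u = z
      · subst h1; simp [hsz]
      · by_cases h2 : u = y'
        · subst h2; simp [hby', h1]
        · have hdA := hdisj u
          tauto
    have harg1' : Yb b f (A ∪ S) ∪ Zs s f (A ∪ {z}) = W1 := by
      rw [← harg1]; exact Finset.union_comm _ _
    have hy'W3 : y' ∈ C f W3 := by
      have hsub : A ∪ {y', z} ⊆ A ∪ S := by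
        intro u hu
        simp only [Finset.mem_union, Finset.mem_insert, Finset.mem_singleton] at hu ⊢
        rcases hu with h | h | h
        · exact Or.inl h
        · exact Or.inr (h ▸ hy'S)
        · exact Or.inr (h ▸ hz)
      have hmono := hfs.1 f (A ∪ {y', z}) (A ∪ S) (A ∪ {z}) hsub
      have hy'notR : y' ∉ RB b s C f (A ∪ S) (A ∪ {z}) := by
        simp only [RB, Finset.mem_sdiff, not_and, not_not, CB, harg1']
        intro _
        simp [Finset.mem_filter, hy'C1, hby']
        exact hy'C1
      have hy'notR3 : y' ∉ RB b s C f (A ∪ {y', z}) (A ∪ {z}) := fun h => hy'notR (hmono h)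
      have hy'mem : y' ∈ Yb b f (A ∪ {y', z}) := by simp [Yb, hby']
      have hcb : y' ∈ CB b s C f (A ∪ {y', z}) (A ∪ {z}) := by
        by_contra hcon
        exact hy'notR3 (Finset.mem_sdiff.2 ⟨hy'mem, hcon⟩)
      simp only [CB, harg3, Finset.mem_filter] at hcb
      exact hcb.1
    have hXfpair : Xf b s f {y', z} = ({y', z} : Finset X) := by
      ext u
      simp only [Xf, Finset.mem_filter, Finset.mem_insert, Finset.mem_singleton]
      constructor
      · tauto
      · rintro (h | h)
        · subst h; exact ⟨Or.inl rfl, Or.inl hby'⟩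
        · subst h; exact ⟨Or.inr rfl, Or.inr hsz⟩
    have hWpair : Xf b s f A ∪ Xf b s f {y', z} = W3 := by rw [hXfpair]
    by_cases hz3 : z ∈ C f W3
    · left
      intro u hu
      rw [hXfpair] at hu
      rw [hWpair]
      rcases Finset.mem_insert.1 hu with h | h
      · exact h ▸ hy'W3
      · exact (Finset.mem_singleton.1 h) ▸ hz3
    · right
      have hirc3 : C f (W3 \ {z}) = C f W3 := by
        apply hirc f W3
        · intro u hu
          refine Finset.mem_sdiff.2 ⟨hC f W3 hu, ?_⟩
          simp only [Finset.mem_singleton]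
          rintro rfl; exact hz3 hu
        · exact Finset.sdiff_subset
      have hW3z : W3 \ {z} = Xf b s f A ∪ {y'} := by
        ext u
        simp only [hW3def, Finset.mem_sdiff, Finset.mem_union, Finset.mem_insert,
          Finset.mem_singleton, Xf, Finset.mem_filter]
        constructor
        · rintro ⟨h1 | h1 | h1, h2⟩
          · exact Or.inl h1
          · exact Or.inr h1
          · exact absurd h1 h2
        · rintro (h | h)
          · exact ⟨Or.inl h, fun hc => hdisj u (hc ▸ hz) h.1⟩
          · exact ⟨Or.inr (Or.inl h), fun hc => hy'ne (h ▸ hc ▸ rfl)⟩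
      have hy'fin : y' ∈ C f (Xf b s f A ∪ {y'}) := by
        rw [← hW3z, hirc3]; exact hy'W3
      intro u hu
      have huy : u = y' := by
        simpa [Xf] using (Finset.mem_filter.1 hu).1
      subst huy
      have hrw : Xf b s f A ∪ Xf b s f {u} = Xf b s f A ∪ {u} := by
        ext v
        simp only [Xf, Finset.mem_union, Finset.mem_filter, Finset.mem_singleton]
        constructor
        · tauto
        · rintro (h | h)
          · exact Or.inl h
          · subst h; exact Or.inr ⟨rfl, Or.inl hby'⟩
      rw [hrw]; exact hy'fin

lemma walkFS (hC : ∀ (f : F) (A : Finset X), C f A ⊆ A)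
    (hfs : FullySubstitutable b s C) (hirc : IRC C)
    (A : Finset X) (M : ℕ) (x : ℕ → X)
    (hinj : ∀ i j, i < M → j < M → x i = x j → i = j)
    (htrail : ∀ i, i + 1 < M → b (x i) = s (x (i + 1)))
    (hnotA : ∀ i, i < M → x i ∉ A)
    (hFS : ∀ i, 0 < i → i < M →
      Rational b s C A ((Finset.Ico (i - 1) M).image x) (b (x (i - 1))))
    (hend : Rational b s C A {x (M - 1)} (b (x (M - 1)))) :
    ∀ d k, k < M → M - 1 - k ≤ d →
      ∀ (N : ℕ) (z : ℕ → X), 0 < N →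
        (∀ i j, i < N → j < N → z i = z j → i = j) →
        (∀ i, i + 1 < N → b (z i) = s (z (i + 1))) →
        (∀ i, i < N → z i ∉ A) →
        Rational b s C A {z 0} (s (z 0)) →
        (∀ i, 0 < i → i < N → Rational b s C A {z (i - 1), z i} (b (z (i - 1)))) →
        z (N - 1) = x k →
        (∀ i, i < N → ∀ j, k < j → j < M → z i ≠ x j) →
        LocallyBlockingTrail b s C A := by
  intro d
  induction d with
  | zero =>
    intro k hkM hk N z hN hzinj hztrail hznotA hzstart hzpairs hzend _
    have hk' : k = M - 1 := by omega
    subst hk'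
    exact ⟨N, z, hN, hzinj, hztrail, hznotA, hzstart, hzpairs, by rw [hzend]; exact hend⟩
  | succ d ih =>
    intro k hkM hk N z hN hzinj hztrail hznotA hzstart hzpairs hzend hzavoid
    by_cases hklast : k = M - 1
    · subst hklast
      exact ⟨N, z, hN, hzinj, hztrail, hznotA, hzstart, hzpairs, by rw [hzend]; exact hend⟩
    · have hkM1 : k + 1 < M := by omega
      have hRat := hFS (k + 1) (by omega) hkM1
      simp only [Nat.add_sub_cancel] at hRat
      set S : Finset X := (Finset.Ico k M).image x with hSdef
      have hdisjS : ∀ u ∈ S, u ∉ A := by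
        intro u hu
        obtain ⟨j, hj, rfl⟩ := Finset.mem_image.1 hu
        exact hnotA j (Finset.mem_Ico.1 hj).2
      have hxkS : x k ∈ S := by
        exact Finset.mem_image.2 ⟨k, Finset.mem_Ico.2 ⟨le_refl k, by omega⟩, rfl⟩
      rcases lemB hC hfs hirc A S hdisjS (b (x k)) (x k) hxkS rfl hRat with
        hsingle | ⟨z', hz'S, hz'ne, hsz', hcase⟩
      · exact ⟨N, z, hN, hzinj, hztrail, hznotA, hzstart, hzpairs,
          by rw [hzend]; exact hsingle⟩
      · obtain ⟨j, hjIco, hxj⟩ := Finset.mem_image.1 hz'S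
        obtain ⟨hjk, hjM⟩ := Finset.mem_Ico.1 hjIco
        have hjne : j ≠ k := fun h => hz'ne (by rw [← hxj, h])
        have hjk' : k < j := by omega
        have hmeas : M - 1 - j ≤ d := by omega
        rcases hcase with hpair | hsingle
        · -- extend the pre-trail by x j
          set z2 : ℕ → X := fun i => if i < N then z i else x j with hz2def
          have hz2small : ∀ i, i < N → z2 i = z i := by
            intro i hi; simp only [hz2def, if_pos hi]
          have hz2N : z2 N = x j := by simp [hz2def]
          apply ih j hjM hmeas (N + 1) z2 (by omega)
          · intro i i' hi hi' heq
            rcases Nat.lt_or_ge i N with h1 | h1 <;> rcases Nat.lt_or_ge i' N with h2 | h2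
            · exact hzinj i i' h1 h2 (by rwa [hz2small i h1, hz2small i' h2] at heq)
            · exfalso
              have hi'N : i' = N := by omega
              rw [hz2small i h1, hi'N, hz2N] at heq
              exact hzavoid i h1 j hjk' hjM heq
            · exfalso
              have hiN : i = N := by omega
              rw [hz2small i' h2, hiN, hz2N] at heq
              exact hzavoid i' h2 j hjk' hjM heq.symm
            · omega
          · intro i hi
            rcases Nat.lt_or_ge (i + 1) N with h1 | h1
            · rw [hz2small i (by omega), hz2small (i + 1) h1]
              exact hztrail i h1
            · have hiN : i + 1 = N := by omega
              have e1 : z2 i = x k := by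
                rw [hz2small i (by omega), show i = N - 1 by omega]
                exact hzend
              have e2 : z2 (i + 1) = x j := by rw [hiN, hz2N]
              rw [e1, e2, hxj]
              exact hsz'.symm
          · intro i hi
            rcases Nat.lt_or_ge i N with h1 | h1
            · rw [hz2small i h1]; exact hznotA i h1
            · rw [show i = N from by omega, hz2N]; exact hnotA j hjM
          · rw [hz2small 0 hN]; exact hzstart
          · intro i hi0 hi
            rcases Nat.lt_or_ge i N with h1 | h1
            · rw [hz2small i h1, hz2small (i - 1) (by omega)]
              exact hzpairs i hi0 h1
            · have hiN : i = N := by omega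
              rw [hiN, hz2N, hz2small (N - 1) (by omega), hzend]
              rw [← hxj] at hpair
              exact hpair
          · rw [Nat.add_sub_cancel, hz2N]
          · intro i hi j' hj' hj'M
            rcases Nat.lt_or_ge i N with h1 | h1
            · rw [hz2small i h1]
              exact hzavoid i h1 j' (by omega) hj'M
            · rw [show i = N from by omega, hz2N]
              intro heq
              exact absurd (hinj j j' hjM hj'M heq) (by omega)
        · -- restart at x j
          apply ih j hjM hmeas 1 (fun _ => x j) one_pos
          · intro i i' hi hi' _; omega
          · intro i hi; omega
          · intro i _; exact hnotA j hjM
          · show Rational b s C A {x j} (s (x j))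
            rw [hxj, hsz']
            exact hsingle
          · intro i hi0 hi; omega
          · rfl
          · intro i _ j' hj' hj'M heq
            exact absurd (hinj j j' hjM hj'M heq) (by omega)

lemma walkIS (hC : ∀ (f : F) (A : Finset X), C f A ⊆ A)
    (hfs : FullySubstitutable b s C) (hirc : IRC C)
    (A : Finset X) (M : ℕ) (x : ℕ → X)
    (hinj : ∀ i j, i < M → j < M → x i = x j → i = j)
    (htrail : ∀ i, i + 1 < M → b (x i) = s (x (i + 1)))
    (hnotA : ∀ i, i < M → x i ∉ A)
    (hIS : ∀ i, 0 < i → i < M →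
      Rational b s C A ((Finset.range (i + 1)).image x) (b (x (i - 1))))
    (hstart : Rational b s C A {x 0} (s (x 0))) :
    ∀ d k, k < M → k ≤ d →
      ∀ (N : ℕ) (z : ℕ → X), 0 < N →
        (∀ i j, i < N → j < N → z i = z j → i = j) →
        (∀ i, i + 1 < N → b (z i) = s (z (i + 1))) →
        (∀ i, i < N → z i ∉ A) →
        Rational b s C A {z (N - 1)} (b (z (N - 1))) →
        (∀ i, 0 < i → i < N → Rational b s C A {z (i - 1), z i} (b (z (i - 1)))) →
        z 0 = x k →
        (∀ i, i < N → ∀ j, j < k → z i ≠ x j) →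
        LocallyBlockingTrail b s C A := by
  intro d
  induction d with
  | zero =>
    intro k hkM hk N z hN hzinj hztrail hznotA hzendR hzpairs hzstart _
    have hk' : k = 0 := by omega
    subst hk'
    exact ⟨N, z, hN, hzinj, hztrail, hznotA, by rw [hzstart]; exact hstart,
      hzpairs, hzendR⟩
  | succ d ih =>
    intro k hkM hk N z hN hzinj hztrail hznotA hzendR hzpairs hzstart hzavoid
    by_cases hk0 : k = 0
    · subst hk0
      exact ⟨N, z, hN, hzinj, hztrail, hznotA, by rw [hzstart]; exact hstart,
        hzpairs, hzendR⟩
    · have hk1 : 0 < k := by omega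
      have hRat := hIS k hk1 hkM
      have hbs : b (x (k - 1)) = s (x k) := by
        have := htrail (k - 1) (by omega)
        rwa [show k - 1 + 1 = k by omega] at this
      set S : Finset X := (Finset.range (k + 1)).image x with hSdef
      have hdisjS : ∀ u ∈ S, u ∉ A := by
        intro u hu
        obtain ⟨j, hj, rfl⟩ := Finset.mem_image.1 hu
        have hj' := Finset.mem_range.1 hj
        exact hnotA j (by omega)
      have hxkS : x k ∈ S := by
        exact Finset.mem_image.2 ⟨k, Finset.mem_range.2 (by omega), rfl⟩
      rcases lemB' hC hfs hirc A S hdisjS (b (x (k - 1))) (x k) hxkS hbs.symm hRat with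
        hsingle | ⟨y', hy'S, hy'ne, hby', hcase⟩
      · refine ⟨N, z, hN, hzinj, hztrail, hznotA, ?_, hzpairs, hzendR⟩
        rw [hzstart, ← hbs]
        exact hsingle
      · obtain ⟨j, hjr, hxj⟩ := Finset.mem_image.1 hy'S
        have hjk1 : j < k + 1 := Finset.mem_range.1 hjr
        have hjne : j ≠ k := fun h => hy'ne (by rw [← hxj, h])
        have hjk : j < k := by omega
        have hjM : j < M := by omega
        have hmeas : j ≤ d := by omega
        rcases hcase with hpair | hsingle
        · -- prepend x j before the post-trail
          set z2 : ℕ → X := fun i => if i = 0 then x j else z (i - 1) with hz2def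
          have hz20 : z2 0 = x j := by simp [hz2def]
          have hz2succ : ∀ i, 0 < i → z2 i = z (i - 1) := by
            intro i hi; simp only [hz2def, if_neg (by omega : ¬ i = 0)]
          apply ih j hjM hmeas (N + 1) z2 (by omega)
          · intro i i' hi hi' heq
            rcases Nat.eq_zero_or_pos i with h1 | h1 <;>
              rcases Nat.eq_zero_or_pos i' with h2 | h2
            · omega
            · exfalso
              rw [h1, hz20, hz2succ i' h2] at heq
              exact hzavoid (i' - 1) (by omega) j hjk heq.symm
            · exfalso
              rw [h2, hz20, hz2succ i h1] at heq
              exact hzavoid (i - 1) (by omega) j hjk heq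
            · have := hzinj (i - 1) (i' - 1) (by omega) (by omega)
                (by rwa [hz2succ i h1, hz2succ i' h2] at heq)
              omega
          · intro i hi
            rcases Nat.eq_zero_or_pos i with h1 | h1
            · rw [h1, hz20, hz2succ 1 one_pos]
              show b (x j) = s (z 0)
              rw [hzstart, hxj, hby', hbs]
            · rw [hz2succ i h1, hz2succ (i + 1) (by omega),
                show i + 1 - 1 = i - 1 + 1 by omega]
              exact hztrail (i - 1) (by omega)
          · intro i hi
            rcases Nat.eq_zero_or_pos i with h1 | h1
            · rw [h1, hz20]; exact hnotA j hjM
            · rw [hz2succ i h1]; exact hznotA (i - 1) (by omega)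
          · rw [show N + 1 - 1 = N by omega, hz2succ N (by omega)]
            exact hzendR
          · intro i hi0 hi
            rcases Nat.lt_or_ge i 2 with h1 | h1
            · have hi1 : i = 1 := by omega
              rw [hi1, hz2succ 1 one_pos, show (1 : ℕ) - 1 = 0 from rfl, hz20]
              show Rational b s C A {x j, z 0} (b (x j))
              rw [hzstart, hxj, hby']
              exact hpair
            · rw [hz2succ i (by omega), hz2succ (i - 1) (by omega)]
              exact hzpairs (i - 1) (by omega) (by omega)
          · exact hz20
          · intro i hi j' hj'
            rcases Nat.eq_zero_or_pos i with h1 | h1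
            · rw [h1, hz20]
              intro heq
              exact absurd (hinj j j' hjM (by omega) heq) (by omega)
            · rw [hz2succ i h1]
              exact hzavoid (i - 1) (by omega) j' (by omega)
        · -- restart at x j
          apply ih j hjM hmeas 1 (fun _ => x j) one_pos
          · intro i i' hi hi' _; omega
          · intro i hi; omega
          · intro i _; exact hnotA j hjM
          · show Rational b s C A {x j} (b (x j))
            rw [hxj, hby']
            exact hsingle
          · intro i hi0 hi; omega
          · rfl
          · intro i _ j' hj' heq
            exact absurd (hinj j j' hjM (by omega) heq) (by omega)

end Aux

/-- every fully trail-stable outcome is trail-stable. -/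
theorem fullyTrailStable_implies_trailStable [Fintype X] (b s : X → F)
    (C : F → Finset X → Finset X)
    (hC : ∀ (f : F) (A : Finset X), C f A ⊆ A)
    (hfs : FullySubstitutable b s C) (hirc : IRC C)
    (A : Finset X) (hA : FullyTrailStable b s C A) :
    TrailStable b s C A := by
  refine ⟨hA.1, ?_⟩
  rintro ⟨M, x, hM, hinj, htrail, hnotA, hstart, hseg, hend⟩
  apply hA.2
  rcases hseg with hIS | hFS
  · refine walkIS hC hfs hirc A M x hinj htrail hnotA hIS hstart (M - 1) (M - 1)
      (by omega) le_rfl 1 (fun _ => x (M - 1)) one_pos ?_ ?_ ?_ ?_ ?_ rfl ?_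
    · intro i j hi hj _; omega
    · intro i hi; omega
    · intro i _; exact hnotA (M - 1) (by omega)
    · exact hend
    · intro i h0 hi; omega
    · intro i _ j hj heq
      exact absurd (hinj (M - 1) j (by omega) (by omega) heq) (by omega)
  · refine walkFS hC hfs hirc A M x hinj htrail hnotA hFS hend (M - 1) 0
      (by omega) (by omega) 1 (fun _ => x 0) one_pos ?_ ?_ ?_ ?_ ?_ rfl ?_
    · intro i j hi hj _; omega
    · intro i hi; omega
    · intro i _; exact hnotA 0 (by omega)
    · exact hstart
    · intro i h0 hi; omega
    · intro i _ j hj hjM heq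
      exact absurd (hinj 0 j (by omega) hjM heq) (by omega)
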